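/- For the fitness dynamic ḟ = −H L f with H symmetric positive definite and L symmetric positive semidefinite with second smallest eigenvalue λ₂(L) > 0 and L 1_n = 0 (constant L), every solution converges to a constant multiple of 1_n: the component of f orthogonal to the kernel of H L decays, and f(t) → α 1_n for some α. -/

import Mathlib

open Matrix

lemma quad_continuous' {n : ℕ} (A : Matrix (Fin n) (Fin n) ℝ) :
    Continuous fun x : Fin n → ℝ => x ⬝ᵥ A.mulVec x := by
  have : (fun x : Fin n → ℝ => x ⬝ᵥ A.mulVec x)
      = fun x => ∑ i, x i * ∑ j, A i j * x j := rfl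
  rw [this]
  exact continuous_finset_sum _ fun i _ => (continuous_apply i).mul
    (continuous_finset_sum _ fun j _ => continuous_const.mul (continuous_apply j))

lemma quad_smul' {n : ℕ} (A : Matrix (Fin n) (Fin n) ℝ) (c : ℝ) (x : Fin n → ℝ) :
    (c • x) ⬝ᵥ A.mulVec (c • x) = c ^ 2 * (x ⬝ᵥ A.mulVec x) := by
  simp [Matrix.mulVec_smul, smul_dotProduct, dotProduct_smul, smul_eq_mul]
  ring

lemma symm_dot' {n : ℕ} {A : Matrix (Fin n) (Fin n) ℝ} (hA : Aᵀ = A)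
    (a b : Fin n → ℝ) : a ⬝ᵥ A *ᵥ b = (A *ᵥ a) ⬝ᵥ b := by
  rw [dotProduct_mulVec, ← Matrix.mulVec_transpose, hA]

lemma quad_gap {n : ℕ} (q1 q2 : (Fin n → ℝ) → ℝ)
    (hc1 : Continuous q1) (hc2 : Continuous q2)
    (hh1 : ∀ (c : ℝ) x, q1 (c • x) = c ^ 2 * q1 x)
    (hh2 : ∀ (c : ℝ) x, q2 (c • x) = c ^ 2 * q2 x)
    (C : Set (Fin n → ℝ)) (hC : IsClosed C)
    (hCs : ∀ (c : ℝ) x, x ∈ C → c • x ∈ C)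
    (hq1 : ∀ x ∈ C, x ≠ 0 → 0 < q1 x)
    (hq2 : ∀ x, x ≠ 0 → 0 < q2 x) :
    ∃ ε > 0, ∀ x ∈ C, ε * q2 x ≤ q1 x := by
  have h10 : q1 0 = 0 := by simpa using hh1 0 0
  have h20 : q2 0 = 0 := by simpa using hh2 0 0
  set K := C ∩ Metric.sphere (0 : Fin n → ℝ) 1 with hKdef
  have hK : IsCompact K := (isCompact_sphere 0 1).inter_left hC
  by_cases hne : K.Nonempty
  · obtain ⟨x1, hx1K, hmin⟩ := hK.exists_isMinOn hne hc1.continuousOn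
    obtain ⟨x2, hx2K, hmax⟩ := hK.exists_isMaxOn hne hc2.continuousOn
    have hx1ne : x1 ≠ 0 := by
      intro h
      have := hx1K.2
      rw [h, mem_sphere_zero_iff_norm, norm_zero] at this
      norm_num at this
    have hx1pos : 0 < q1 x1 := hq1 _ hx1K.1 hx1ne
    have hx2pos : 0 < q2 x2 := lt_of_lt_of_le (hq2 x1 hx1ne) (hmax hx1K)
    refine ⟨q1 x1 / q2 x2, div_pos hx1pos hx2pos, ?_⟩
    intro x hx
    by_cases hx0 : x = 0
    · simp [hx0, h10, h20]
    · have hnx : ‖x‖ ≠ 0 := norm_ne_zero_iff.mpr hx0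
      set y := ‖x‖⁻¹ • x with hy
      have hyK : y ∈ K := by
        refine ⟨hCs _ _ hx, ?_⟩
        rw [mem_sphere_zero_iff_norm, hy, norm_smul, norm_inv, norm_norm,
          inv_mul_cancel₀ hnx]
      have hx_eq : x = ‖x‖ • y := by
        rw [hy, smul_smul, mul_inv_cancel₀ hnx, one_smul]
      have e1 : q1 x = ‖x‖ ^ 2 * q1 y := by conv_lhs => rw [hx_eq, hh1]
      have e2 : q2 x = ‖x‖ ^ 2 * q2 y := by conv_lhs => rw [hx_eq, hh2]
      have hy1 : q1 x1 ≤ q1 y := hmin hyK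
      have hy2 : q2 y ≤ q2 x2 := hmax hyK
      have h2 : (0:ℝ) ≤ ‖x‖ ^ 2 := sq_nonneg _
      rw [e1, e2]
      calc q1 x1 / q2 x2 * (‖x‖ ^ 2 * q2 y)
          ≤ q1 x1 / q2 x2 * (‖x‖ ^ 2 * q2 x2) := by
            apply mul_le_mul_of_nonneg_left (mul_le_mul_of_nonneg_left hy2 h2)
              (le_of_lt (div_pos hx1pos hx2pos))
        _ = ‖x‖ ^ 2 * q1 x1 := by field_simp
        _ ≤ ‖x‖ ^ 2 * q1 y := mul_le_mul_of_nonneg_left hy1 h2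
  · refine ⟨1, one_pos, ?_⟩
    intro x hx
    by_cases hx0 : x = 0
    · simp [hx0, h10, h20]
    · exact absurd ⟨‖x‖⁻¹ • x, hCs _ _ hx, by
        rw [mem_sphere_zero_iff_norm, norm_smul, norm_inv, norm_norm,
          inv_mul_cancel₀ (norm_ne_zero_iff.mpr hx0)]⟩ hne

/-- for the linear fitness dynamic `ḟ = −H L f` with `H`
symmetric positive definite, `L` symmetric PSD with `L 1_n = 0` and
`λ₂(L) > 0` (so that `ker L = span{1_n}`), every solution converges to a
constant multiple of the all-ones vector: `f(t) → α 1_n` as `t → ∞`. -/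
theorem fitness_dynamic_converges_to_agreement
    {n : ℕ} (H L : Matrix (Fin n) (Fin n) ℝ)
    (hH : H.PosDef) (hL : L.PosSemidef)
    (hL1 : L.mulVec (fun _ => (1 : ℝ)) = 0)
    (hker : ∀ x : Fin n → ℝ, L.mulVec x = 0 → ∃ α : ℝ, x = fun _ => α)
    (f : ℝ → Fin n → ℝ)
    (hf : ∀ i t, HasDerivAt (fun s => f s i)
      (-((H * L).mulVec (f t) i)) t) :
    ∃ α : ℝ, Filter.Tendsto f Filter.atTop (nhds (fun _ => α)) := by
  rcases Nat.eq_zero_or_pos n with hn | hn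
  · subst hn
    refine ⟨0, ?_⟩
    have hfe : f = fun _ => (fun _ => (0:ℝ)) := funext fun t => funext fun i => i.elim0
    rw [hfe]; exact tendsto_const_nhds
  set one : Fin n → ℝ := (fun _ => (1:ℝ)) with hone_def
  have hone_ne : one ≠ 0 := by
    intro h
    have := congrFun h ⟨0, hn⟩
    norm_num [hone_def] at this
  have hdet : IsUnit H.det := isUnit_iff_ne_zero.mpr hH.det_pos.ne'
  set B : Matrix (Fin n) (Fin n) ℝ := H⁻¹ with hBdef
  have hB : B.PosDef := hH.inv
  have hBH : B * H = 1 := Matrix.nonsing_inv_mul H hdet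
  have hBsym : Bᵀ = B := by simpa using hB.isHermitian.eq
  have hLsym : Lᵀ = L := by simpa using hL.1.eq
  -- the conserved functional ψ(t) = ⟨H⁻¹ 1, f t⟩
  set u : Fin n → ℝ := B *ᵥ one with hu_def
  have hu_HL : ∀ y : Fin n → ℝ, u ⬝ᵥ ((H * L) *ᵥ y) = 0 := by
    intro y
    rw [hu_def, ← symm_dot' hBsym, Matrix.mulVec_mulVec, ← Matrix.mul_assoc, hBH,
      Matrix.one_mul, symm_dot' hLsym, hL1]
    simp
  have hu1pos : 0 < u ⬝ᵥ one := by
    rw [hu_def, ← symm_dot' hBsym]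
    simpa using hB.dotProduct_mulVec_pos hone_ne
  have hψ : ∀ t, u ⬝ᵥ f t = u ⬝ᵥ f 0 := by
    have hdψ : ∀ t, HasDerivAt (fun s => u ⬝ᵥ f s) 0 t := by
      intro t
      have h1 : HasDerivAt (fun s => ∑ i, u i * f s i)
          (∑ i, u i * (-((H * L).mulVec (f t) i))) t :=
        HasDerivAt.fun_sum fun i _ => (hf i t).const_mul (u i)
      have h2 : (∑ i, u i * (-((H * L).mulVec (f t) i))) = 0 := by
        have h3 : (∑ i, u i * (-((H * L).mulVec (f t) i)))
            = -(u ⬝ᵥ ((H * L) *ᵥ f t)) := by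
          simp [dotProduct, mul_neg, Finset.sum_neg_distrib]
        rw [h3, hu_HL, neg_zero]
      rw [h2] at h1
      exact h1
    intro t
    exact is_const_of_deriv_eq_zero (fun s => (hdψ s).differentiableAt)
      (fun s => (hdψ s).deriv) t 0
  set c : ℝ := (u ⬝ᵥ f 0) / (u ⬝ᵥ one) with hc_def
  set g : ℝ → Fin n → ℝ := fun t i => f t i - c with hg_def
  have hg_eq : ∀ t, g t = f t - (fun _ => c) := fun t => rfl
  have hconst_smul : (fun _ : Fin n => c) = c • one := by
    funext i; simp [hone_def]
  have hHLc : (H * L) *ᵥ (fun _ : Fin n => c) = 0 := by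
    rw [hconst_smul, Matrix.mulVec_smul, ← Matrix.mulVec_mulVec, hL1]
    simp
  have hg_mulVec : ∀ t, (H * L) *ᵥ g t = (H * L) *ᵥ f t := by
    intro t
    rw [hg_eq, Matrix.mulVec_sub, hHLc, sub_zero]
  have hg' : ∀ i t, HasDerivAt (fun s => g s i) (-((H * L) *ᵥ g t) i) t := by
    intro i t
    have h := (hf i t).sub_const c
    rw [show -((H * L) *ᵥ g t) i = -((H * L).mulVec (f t) i) by rw [hg_mulVec]]
    exact h
  have hconstraint : ∀ t, u ⬝ᵥ g t = 0 := by
    intro t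
    rw [hg_eq, dotProduct_sub, hψ t, hconst_smul, dotProduct_smul, smul_eq_mul,
      hc_def, div_mul_cancel₀ _ hu1pos.ne', sub_self]
  -- spectral gap on the constraint hyperplane
  have hCclosed : IsClosed {x : Fin n → ℝ | u ⬝ᵥ x = 0} := by
    have hcont : Continuous fun x : Fin n → ℝ => u ⬝ᵥ x :=
      continuous_finset_sum _ fun i _ => continuous_const.mul (continuous_apply i)
    exact isClosed_eq hcont continuous_const
  obtain ⟨ε, hε, hgap⟩ : ∃ ε > 0, ∀ x ∈ {x : Fin n → ℝ | u ⬝ᵥ x = 0},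
      ε * (x ⬝ᵥ B *ᵥ x) ≤ x ⬝ᵥ L *ᵥ x := by
    apply quad_gap (fun x => x ⬝ᵥ L *ᵥ x) (fun x => x ⬝ᵥ B *ᵥ x)
      (quad_continuous' L) (quad_continuous' B) (quad_smul' L) (quad_smul' B)
      _ hCclosed
    · intro cc x hx
      simp only [Set.mem_setOf_eq] at hx ⊢
      rw [dotProduct_smul, hx, smul_zero]
    · intro x hx hx0
      rcases lt_or_eq_of_le (show (0:ℝ) ≤ x ⬝ᵥ L *ᵥ x by simpa using hL.dotProduct_mulVec_nonneg x) with h | h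
      · exact h
      · exfalso
        have hLx : L *ᵥ x = 0 := (hL.dotProduct_mulVec_zero_iff x).mp (by simpa using h.symm)
        obtain ⟨α, hα⟩ := hker x hLx
        have hxα : x = α • one := by rw [hα]; funext i; simp [hone_def]
        have hd : u ⬝ᵥ x = α * (u ⬝ᵥ one) := by rw [hxα, dotProduct_smul, smul_eq_mul]
        have hx' : u ⬝ᵥ x = 0 := hx
        have hα0 : α = 0 := by
          have h0 : α * (u ⬝ᵥ one) = 0 := by rw [← hd, hx']
          rcases mul_eq_zero.mp h0 with h' | h'
          · exact h'
          · exact absurd h' hu1pos.ne'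
        exact hx0 (by rw [hxα, hα0, zero_smul])
    · intro x hx
      simpa using hB.dotProduct_mulVec_pos hx
  -- coercivity of B
  obtain ⟨μ, hμ, hcoer⟩ : ∃ μ > 0, ∀ x ∈ (Set.univ : Set (Fin n → ℝ)),
      μ * ‖x‖ ^ 2 ≤ x ⬝ᵥ B *ᵥ x := by
    apply quad_gap (fun x => x ⬝ᵥ B *ᵥ x) (fun x => ‖x‖ ^ 2)
      (quad_continuous' B) (continuous_norm.pow 2) (quad_smul' B)
      (fun cc x => by
        show ‖cc • x‖ ^ 2 = cc ^ 2 * ‖x‖ ^ 2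
        rw [norm_smul, mul_pow, Real.norm_eq_abs, sq_abs])
      Set.univ isClosed_univ
    · intro cc x _; trivial
    · intro x _ hx0; simpa using hB.dotProduct_mulVec_pos hx0
    · intro x hx0; exact pow_pos (norm_pos_iff.mpr hx0) 2
  -- Lyapunov function
  set V : ℝ → ℝ := fun t => g t ⬝ᵥ B *ᵥ g t with hV_def
  have hVnonneg : ∀ t, 0 ≤ V t := fun t => by simpa using hB.posSemidef.dotProduct_mulVec_nonneg (g t)
  have hV' : ∀ t, HasDerivAt V (-2 * (g t ⬝ᵥ L *ᵥ g t)) t := by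
    intro t
    set d : Fin n → ℝ := -((H * L) *ᵥ g t) with hd_def
    have h1 : HasDerivAt (fun s => ∑ i, ∑ j, g s i * B i j * g s j)
        (∑ i, ∑ j, (d i * B i j * g t j + g t i * B i j * d j)) t := by
      refine HasDerivAt.fun_sum fun i _ => ?_
      refine HasDerivAt.fun_sum fun j _ => ?_
      have h := ((hg' i t).mul_const (B i j)).fun_mul (hg' j t)
      exact h
    have hfun : V = fun s => ∑ i, ∑ j, g s i * B i j * g s j := by
      funext s
      simp only [hV_def, dotProduct, Matrix.mulVec, Finset.mul_sum, mul_assoc]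
    have hval : (∑ i, ∑ j, (d i * B i j * g t j + g t i * B i j * d j))
        = -2 * (g t ⬝ᵥ L *ᵥ g t) := by
      have e1 : (∑ i, ∑ j, d i * B i j * g t j) = d ⬝ᵥ B *ᵥ g t := by
        simp only [dotProduct, Matrix.mulVec, Finset.mul_sum, mul_assoc]
      have e2 : (∑ i, ∑ j, g t i * B i j * d j) = g t ⬝ᵥ B *ᵥ d := by
        simp only [dotProduct, Matrix.mulVec, Finset.mul_sum, mul_assoc]
      have e3 : d ⬝ᵥ B *ᵥ g t = g t ⬝ᵥ B *ᵥ d := by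
        rw [symm_dot' hBsym, dotProduct_comm]
      have e4 : B *ᵥ d = -(L *ᵥ g t) := by
        rw [hd_def, Matrix.mulVec_neg, Matrix.mulVec_mulVec, ← Matrix.mul_assoc,
          hBH, Matrix.one_mul]
      calc (∑ i, ∑ j, (d i * B i j * g t j + g t i * B i j * d j))
          = (∑ i, ∑ j, d i * B i j * g t j) + (∑ i, ∑ j, g t i * B i j * d j) := by
            rw [← Finset.sum_add_distrib]
            exact Finset.sum_congr rfl fun i _ => Finset.sum_add_distrib
        _ = 2 * (g t ⬝ᵥ B *ᵥ d) := by rw [e1, e2, e3]; ring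
        _ = -2 * (g t ⬝ᵥ L *ᵥ g t) := by rw [e4, dotProduct_neg]; ring
    rw [hfun, ← hval]
    exact h1
  have hVdiff : ∀ t, -2 * (g t ⬝ᵥ L *ᵥ g t) ≤ -(2 * ε) * V t := by
    intro t
    have h := hgap (g t) (hconstraint t)
    have hVt : V t = g t ⬝ᵥ B *ᵥ g t := rfl
    nlinarith
  -- Gronwall-type exponential decay
  set W : ℝ → ℝ := fun t => V t * Real.exp (2 * ε * t) with hW_def
  have hW' : ∀ t, HasDerivAt W
      ((-2 * (g t ⬝ᵥ L *ᵥ g t)) * Real.exp (2 * ε * t)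
        + V t * (Real.exp (2 * ε * t) * (2 * ε))) t := by
    intro t
    have h0 : HasDerivAt (fun s : ℝ => 2 * ε * s) (2 * ε) t := by
      simpa using (hasDerivAt_id t).const_mul (2 * ε)
    exact (hV' t).mul h0.exp
  have hWanti : Antitone W := by
    apply antitone_of_deriv_nonpos (fun t => (hW' t).differentiableAt)
    intro t
    rw [(hW' t).deriv]
    have h1 := hVdiff t
    have h2 := Real.exp_pos (2 * ε * t)
    nlinarith
  have hVbound : ∀ t : ℝ, 0 ≤ t → V t ≤ V 0 * Real.exp (-(2 * ε * t)) := by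
    intro t ht
    have h1 : W t ≤ W 0 := hWanti ht
    have h2 : W 0 = V 0 := by simp [hW_def]
    rw [Real.exp_neg, ← div_eq_mul_inv, le_div_iff₀ (Real.exp_pos _)]
    rw [h2] at h1
    exact h1
  have hVtend : Filter.Tendsto V Filter.atTop (nhds 0) := by
    apply squeeze_zero' (Filter.Eventually.of_forall hVnonneg)
      ((Filter.eventually_ge_atTop (0:ℝ)).mono fun t ht => hVbound t ht)
    have hlin : Filter.Tendsto (fun t : ℝ => -(2 * ε * t)) Filter.atTop Filter.atBot := by
      apply Filter.tendsto_neg_atBot_iff.mpr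
      exact Filter.Tendsto.const_mul_atTop (by positivity) Filter.tendsto_id
    have h := (Real.tendsto_exp_atBot.comp hlin).const_mul (V 0)
    simpa [Function.comp_def] using h
  -- convergence of g to 0
  have hgsq : Filter.Tendsto (fun t => ‖g t‖ ^ 2) Filter.atTop (nhds 0) := by
    refine squeeze_zero (g := fun t => μ⁻¹ * V t) (fun t => sq_nonneg _) (fun t => ?_) ?_
    · have h := hcoer (g t) (Set.mem_univ _)
      calc ‖g t‖ ^ 2 = μ⁻¹ * (μ * ‖g t‖ ^ 2) := by field_simp
        _ ≤ μ⁻¹ * V t := mul_le_mul_of_nonneg_left h (by positivity)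
    · simpa using hVtend.const_mul μ⁻¹
  have hgn : Filter.Tendsto (fun t => ‖g t‖) Filter.atTop (nhds 0) := by
    have h := (Real.continuous_sqrt.tendsto 0).comp hgsq
    rw [show (fun t => ‖g t‖) = fun t => Real.sqrt (‖g t‖ ^ 2) from
      funext fun t => (Real.sqrt_sq (norm_nonneg _)).symm]
    simpa [Function.comp_def] using h
  have hgtend : Filter.Tendsto g Filter.atTop (nhds 0) :=
    tendsto_zero_iff_norm_tendsto_zero.mpr hgn
  refine ⟨c, ?_⟩
  have hfg : f = fun t => g t + (fun _ => c) :=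
    funext fun t => funext fun i => by simp [hg_def]
  rw [hfg]
  have h := hgtend.add (tendsto_const_nhds (x := fun _ : Fin n => c))
  simpa using h
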